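/- Let Λ and Θ be connected countably infinite graphs of infinite diameter, and let Γ = Λ □ Θ be their Cartesian product. Then for every n ∈ ℕ and all distinct vertices (λ,θ) ≠ (λ',θ') of Γ, the spheres S((λ,θ),n) and S((λ',θ'),n) in Γ are distinct. -/

import Mathlib

open SimpleGraph

section Aux

variable {V : Type*} {G : SimpleGraph V}

private lemma walk_split (hG : G.Connected) {u v : V} (w : G.Walk u v) :
    ∀ k, k ≤ w.length → ∃ m, G.dist u m ≤ k ∧ G.dist m v ≤ w.length - k := by
  induction w with
  | nil =>
    rename_i z
    exact fun k _ => ⟨z, by simp [SimpleGraph.dist_self], by simp [SimpleGraph.dist_self]⟩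
  | @cons u u' v h w ih =>
    intro k hk
    rcases Nat.eq_zero_or_pos k with rfl | hk0
    · refine ⟨u, by simp, ?_⟩
      simpa using G.dist_le (SimpleGraph.Walk.cons h w)
    · obtain ⟨m, hm1, hm2⟩ := ih (k - 1) (by simp at hk ⊢; omega)
      refine ⟨m, ?_, by simp; omega⟩
      have ht := hG.dist_triangle (u := u) (v := u') (w := m)
      have h1 : G.dist u u' = 1 := (SimpleGraph.dist_eq_one_iff_adj).mpr h
      omega

private lemma dist_split (hG : G.Connected) {u v : V} {k : ℕ} (hk : k ≤ G.dist u v) :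
    ∃ m, G.dist u m = k ∧ G.dist m v = G.dist u v - k := by
  obtain ⟨w, hw⟩ := hG.exists_walk_length_eq_dist u v
  obtain ⟨m, hm1, hm2⟩ := walk_split hG w k (by omega)
  rw [hw] at hm2
  have ht := hG.dist_triangle (u := u) (v := m) (w := v)
  exact ⟨m, by omega, by omega⟩

private lemma exists_dist_eq' (hG : G.Connected)
    (hdiam : ∀ n : ℕ, ∃ u v : V, n ≤ G.dist u v) (a : V) (m : ℕ) :
    ∃ v, G.dist a v = m := by
  obtain ⟨u, v, huv⟩ := hdiam (2 * m)
  have ht := hG.dist_triangle (u := u) (v := a) (w := v)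
  have hc : G.dist u a = G.dist a u := G.dist_comm
  rcases le_or_gt m (G.dist a u) with h | h
  · obtain ⟨w, hw, _⟩ := dist_split hG h; exact ⟨w, hw⟩
  · have h2 : m ≤ G.dist a v := by omega
    obtain ⟨w, hw, _⟩ := dist_split hG h2; exact ⟨w, hw⟩

end Aux

section BoxDist

variable {α β : Type*} {G : SimpleGraph α} {H : SimpleGraph β}

private lemma boxProd_dist_le_walk (hG : G.Connected) (hH : H.Connected) :
    ∀ {x y : α × β} (w : (G.boxProd H).Walk x y),
      G.dist x.1 y.1 + H.dist x.2 y.2 ≤ w.length := by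
  intro x y w
  induction w with
  | nil => simp
  | @cons x z y h w ih =>
    rcases SimpleGraph.boxProd_adj.mp h with ⟨ha, he⟩ | ⟨ha, he⟩
    · have h1 : G.dist x.1 z.1 = 1 := (SimpleGraph.dist_eq_one_iff_adj).mpr ha
      have ht := hG.dist_triangle (u := x.1) (v := z.1) (w := y.1)
      have : H.dist x.2 y.2 = H.dist z.2 y.2 := by rw [he]
      simp only [SimpleGraph.Walk.length_cons]
      omega
    · have h1 : H.dist x.2 z.2 = 1 := (SimpleGraph.dist_eq_one_iff_adj).mpr ha
      have ht := hH.dist_triangle (u := x.2) (v := z.2) (w := y.2)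
      have : G.dist x.1 y.1 = G.dist z.1 y.1 := by rw [he]
      simp only [SimpleGraph.Walk.length_cons]
      omega

private lemma boxProd_dist (hG : G.Connected) (hH : H.Connected) (a c : α) (b d : β) :
    (G.boxProd H).dist (a, b) (c, d) = G.dist a c + H.dist b d := by
  apply le_antisymm
  · obtain ⟨w1, hw1⟩ := hG.exists_walk_length_eq_dist a c
    obtain ⟨w2, hw2⟩ := hH.exists_walk_length_eq_dist b d
    have := (G.boxProd H).dist_le ((w1.boxProdLeft H b).append (w2.boxProdRight G c))
    have e1 : (w1.boxProdLeft H b).length = w1.length := SimpleGraph.Walk.length_map _ _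
    have e2 : (w2.boxProdRight G c).length = w2.length := SimpleGraph.Walk.length_map _ _
    rwa [SimpleGraph.Walk.length_append, e1, e2, hw1, hw2] at this
  · obtain ⟨w, hw⟩ := (hG.boxProd hH).exists_walk_length_eq_dist (a, b) (c, d)
    have := boxProd_dist_le_walk hG hH w
    rw [hw] at this
    exact this

end BoxDist

def sphere {V : Type*} (G : SimpleGraph V) (γ : V) (n : ℕ) : Set V :=
  {v | G.dist γ v = n}

/-- In the Cartesian product of two connected denumerable graphs of infinite diameter,
distinct vertices have distinct spheres of every radius. -/
theorem stmt9 {α β : Type*} [Countable α] [Infinite α] [Countable β] [Infinite β]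
    (Λ : SimpleGraph α) (Θ : SimpleGraph β)
    (hΛ : Λ.Connected) (hΘ : Θ.Connected)
    (hΛdiam : ∀ n : ℕ, ∃ u v : α, n ≤ Λ.dist u v)
    (hΘdiam : ∀ n : ℕ, ∃ u v : β, n ≤ Θ.dist u v) :
    ∀ (n : ℕ) (x y : α × β), x ≠ y →
      sphere (Λ.boxProd Θ) x n ≠ sphere (Λ.boxProd Θ) y n := by
  rintro n ⟨a, b⟩ ⟨c, d⟩ hxy hS
  -- the key equivalence coming from sphere equality
  have key : ∀ (u : α) (w : β),
      Λ.dist a u + Θ.dist b w = n ↔ Λ.dist c u + Θ.dist d w = n := by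
    intro u w
    have := Set.ext_iff.mp hS (u, w)
    simpa [sphere, Set.mem_setOf_eq, boxProd_dist hΛ hΘ] using this
  set p := Λ.dist a c with hp
  set q := Θ.dist b d with hq
  -- u1 at distance n from a
  obtain ⟨u1, hu1⟩ := exists_dist_eq' hΛ hΛdiam a n
  have hA : Λ.dist c u1 + q = n := by
    have := (key u1 b).mp (by simp [hu1])
    simpa [Θ.dist_comm (u := d) (v := b)] using this
  -- w1 at distance n from b
  obtain ⟨w1, hw1⟩ := exists_dist_eq' hΘ hΘdiam b n
  have hB : p + Θ.dist d w1 = n := by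
    have := (key a w1).mp (by simp [hw1])
    simpa [Λ.dist_comm (u := c) (v := a)] using this
  -- q ≤ p and p ≤ q
  have htA := hΛ.dist_triangle (u := a) (v := c) (w := u1)
  have htB := hΘ.dist_triangle (u := b) (v := d) (w := w1)
  have hqp : q ≤ p := by omega
  have hpq : p ≤ q := by omega
  have hq1 : 1 ≤ q := by
    rcases Nat.eq_zero_or_pos q with h0 | h
    · exfalso
      have hp0 : p = 0 := by omega
      have : a = c := (hΛ.dist_eq_zero_iff).mp hp0
      have : b = d := (hΘ.dist_eq_zero_iff).mp h0
      apply hxy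
      simp_all
    · exact h
  -- u2 at distance n from c
  obtain ⟨u2, hu2⟩ := exists_dist_eq' hΛ hΛdiam c n
  have hC : Λ.dist a u2 + q = n := (key u2 d).mpr (by simp [hu2])
  -- sphere of radius q around b is {d}
  have hsingb : ∀ w, Θ.dist b w = q → w = d := by
    intro w hw
    have := (key u2 w).mp (by omega)
    have hd0 : Θ.dist d w = 0 := by omega
    exact ((hΘ.dist_eq_zero_iff).mp hd0).symm ▸ rfl
  -- sphere of radius q around d is {b}
  have hsingd : ∀ w, Θ.dist d w = q → w = b := by
    intro w hw
    have := (key u1 w).mpr (by omega)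
    have hb0 : Θ.dist b w = 0 := by omega
    exact ((hΘ.dist_eq_zero_iff).mp hb0).symm ▸ rfl
  -- a vertex at distance 2q from b
  obtain ⟨w0, hw0⟩ := exists_dist_eq' hΘ hΘdiam b (2 * q)
  obtain ⟨m, hm1, hm2⟩ := dist_split hΘ (k := q) (u := b) (v := w0) (by omega)
  have hmd : m = d := hsingb m hm1
  subst hmd
  have : Θ.dist m w0 = q := by omega
  have hw0b : w0 = b := hsingd w0 this
  subst hw0b
  simp [SimpleGraph.dist_self] at hw0
  omega
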